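/- sup_{ε>0} V_ε(f,T) = V(f,T); in particular, V_ε(f,T) → V(f,T) as ε → 0⁺ (with values in [0,∞]). -/

import Mathlib

open Filter Set
open scoped ENNReal Topology

/-- The approximate (ε-)variation: infimum of Jordan variations of functions of
bounded variation uniformly ε-close to `f` on `T` (⊤ if no such function). -/
noncomputable def approxVar {M : Type*} [MetricSpace M] (f : ℝ → M) (T : Set ℝ) (ε : ℝ) : ℝ≥0∞ :=
  ⨅ (g : ℝ → M) (_ : eVariationOn g T ≠ ⊤ ∧ ∀ t ∈ T, dist (f t) (g t) ≤ ε),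
    eVariationOn g T

/-- The oscillation (diameter of the image) of `f` on `T`, valued in `[0,∞]`. -/
noncomputable def oscOn {M : Type*} [MetricSpace M] (f : ℝ → M) (T : Set ℝ) : ℝ≥0∞ :=
  ⨆ s ∈ T, ⨆ t ∈ T, edist (f s) (f t)

theorem iSup_approxVar_eq_variation {M : Type*} [MetricSpace M] (f : ℝ → M) (T : Set ℝ)
    (hT : T.Nonempty) :
    (⨆ (ε : ℝ) (_ : 0 < ε), approxVar f T ε) = eVariationOn f T ∧
    Tendsto (fun ε => approxVar f T ε) (𝓝[>] (0 : ℝ)) (𝓝 (eVariationOn f T)) := by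
  have anti : Antitone (approxVar f T) := by
    intro a b hab
    refine iInf_mono fun g => ?_
    refine iInf_mono' fun hg => ⟨⟨hg.1, fun t ht => (hg.2 t ht).trans hab⟩, le_rfl⟩
  have key : (⨆ (ε : ℝ) (_ : 0 < ε), approxVar f T ε) = eVariationOn f T := by
    apply le_antisymm
    · refine iSup₂_le fun ε hε => ?_
      by_cases h : eVariationOn f T = ⊤
      · simp [h]
      · exact iInf_le_of_le f (iInf_le_of_le ⟨h, fun t ht => by simp [hε.le]⟩ le_rfl)
    · rw [eVariationOn]
      refine iSup_le fun p => ?_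
      obtain ⟨n, u, hu, us⟩ := p
      set S := ∑ i ∈ Finset.range n, edist (f (u (i + 1))) (f (u i)) with hS
      have hstep : ∀ ε : ℝ, 0 < ε →
          S ≤ approxVar f T ε + ENNReal.ofReal (2 * n * ε) := by
        intro ε hε
        have h1 : S - ENNReal.ofReal (2 * n * ε) ≤ approxVar f T ε := by
          refine le_iInf fun g => le_iInf fun hg => ?_
          rw [tsub_le_iff_right]
          have h2 : ∀ i, edist (f (u (i + 1))) (f (u i)) ≤
              edist (g (u (i + 1))) (g (u i)) + ENNReal.ofReal (2 * ε) := by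
            intro i
            rw [edist_dist, edist_dist, ← ENNReal.ofReal_add dist_nonneg (by positivity)]
            refine ENNReal.ofReal_le_ofReal ?_
            have d1 := hg.2 (u (i + 1)) (us (i + 1))
            have d2 := hg.2 (u i) (us i)
            have := dist_triangle4 (f (u (i+1))) (g (u (i+1))) (g (u i)) (f (u i))
            rw [dist_comm (g (u i)) (f (u i))] at this
            linarith
          calc S ≤ ∑ i ∈ Finset.range n,
                (edist (g (u (i + 1))) (g (u i)) + ENNReal.ofReal (2 * ε)) :=
                Finset.sum_le_sum fun i _ => h2 i
            _ = (∑ i ∈ Finset.range n, edist (g (u (i + 1))) (g (u i)))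
                + n * ENNReal.ofReal (2 * ε) := by
                rw [Finset.sum_add_distrib, Finset.sum_const, Finset.card_range, nsmul_eq_mul]
            _ ≤ eVariationOn g T + ENNReal.ofReal (2 * n * ε) := by
                gcongr
                · exact eVariationOn.sum_le (f := g) (n := n) hu us
                · rw [← ENNReal.ofReal_natCast, ← ENNReal.ofReal_mul (by positivity)]
                  exact ENNReal.ofReal_le_ofReal (by ring_nf; rfl)
        calc S ≤ S - ENNReal.ofReal (2 * n * ε) + ENNReal.ofReal (2 * n * ε) := le_tsub_add
          _ ≤ approxVar f T ε + ENNReal.ofReal (2 * n * ε) := by gcongr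
      refine ENNReal.le_of_forall_pos_le_add fun δ hδ _ => ?_
      set ε : ℝ := δ / (2 * n + 1) with hε
      have hεpos : 0 < ε := by positivity
      have hle : ENNReal.ofReal (2 * n * ε) ≤ (δ : ℝ≥0∞) := by
        rw [← ENNReal.ofReal_coe_nnreal]
        refine ENNReal.ofReal_le_ofReal ?_
        rw [hε, mul_div_assoc', div_le_iff₀ (by positivity : (0:ℝ) < 2 * (n:ℝ) + 1)]
        nlinarith [δ.coe_nonneg]
      calc S ≤ approxVar f T ε + ENNReal.ofReal (2 * n * ε) := hstep ε hεpos
        _ ≤ (⨆ (ε : ℝ) (_ : 0 < ε), approxVar f T ε) + δ := by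
            gcongr
            exact le_iSup₂ (f := fun ε (_ : (0:ℝ) < ε) => approxVar f T ε) ε hεpos
  refine ⟨key, ?_⟩
  have h := anti.tendsto_nhdsGT 0
  rw [sSup_image] at h
  convert h using 2
  rw [← key]
  exact (iSup_congr fun ε => by rw [mem_Ioi]).symm
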